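/- Let ℓ ≥ 1 and let u be a finite mass solution of the coagulation-with-emission equations on [0,T] with small initial conditions, i.e. u_i(0) = 0 for every i > ℓ. Then u_i(t) = 0 for every i > ℓ and every t ∈ [0,T] (no spontaneous generation of large clusters). -/

import Mathlib

open Finset Filter Topology

noncomputable section

private lemma w_min_bound {N ℓ i j : ℕ} (hN : ℓ ≤ N) (hi : 1 ≤ i) (hj : 1 ≤ j)
    (hij : 2*ℓ+1 ≤ i+j) :
    min (i+j-ℓ) (2*N - (i+j-ℓ)) ≤
      (if i ≤ ℓ then ℓ else min i (2*N-i)) + (if j ≤ ℓ then ℓ else min j (2*N-j)) := by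
  simp only [Nat.min_def]
  split_ifs <;> omega

private lemma gain_reindex (ℓ N : ℕ) (hℓ : 1 ≤ ℓ) (F : ℕ → ℕ → ℝ) :
    ∑ n ∈ Icc (ℓ+1) (2*N), ∑ i ∈ Icc 1 (n+ℓ-1), F i (n+ℓ-i)
      = ∑ p ∈ (Icc 1 (2*N+ℓ) ×ˢ Icc 1 (2*N+ℓ)).filter
          (fun p => 2*ℓ+1 ≤ p.1+p.2 ∧ p.1+p.2 ≤ 2*N+ℓ), F p.1 p.2 := by
  rw [Finset.sum_sigma']
  refine Finset.sum_nbij' (fun s => (s.2, s.1+ℓ-s.2)) (fun p => ⟨p.1+p.2-ℓ, p.1⟩)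
    ?_ ?_ ?_ ?_ ?_
  · rintro ⟨n, i⟩ hs
    simp only [mem_sigma, mem_Icc] at hs
    simp only [mem_filter, mem_product, mem_Icc]
    omega
  · rintro ⟨i, j⟩ hp
    simp only [mem_filter, mem_product, mem_Icc] at hp
    simp only [mem_sigma, mem_Icc]
    omega
  · rintro ⟨n, i⟩ hs
    simp only [mem_sigma, mem_Icc] at hs
    simp only []
    have h1 : i + (n + ℓ - i) - ℓ = n := by omega
    rw [h1]
  · rintro ⟨i, j⟩ hp
    simp only [mem_filter, mem_product, mem_Icc] at hp
    simp only []
    have h1 : i + j - ℓ + ℓ - i = j := by omega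
    rw [h1]
  · rintro ⟨n, i⟩ hs
    rfl

private lemma swap_sum (P : Finset (ℕ × ℕ)) (hP : ∀ p ∈ P, p.swap ∈ P) (F : ℕ → ℕ → ℝ) :
    ∑ p ∈ P, F p.1 p.2 = ∑ p ∈ P, F p.2 p.1 :=
  Finset.sum_nbij' Prod.swap Prod.swap hP hP (fun _ _ => rfl) (fun _ _ => rfl)
    (fun _ _ => rfl)


/-- Total reaction probability mass
`M(t) = ∑_{m,n ≥ 1, m+n ≥ ℓ+1} m n u_m(t) u_n(t)`. -/
def Mfun (ℓ : ℕ) (u : ℕ → ℝ → ℝ) (t : ℝ) : ℝ :=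
  ∑' p : ℕ × ℕ,
    if 1 ≤ p.1 ∧ 1 ≤ p.2 ∧ ℓ + 1 ≤ p.1 + p.2 then
      (p.1 : ℝ) * (p.2 : ℝ) * u p.1 t * u p.2 t
    else 0

/-- Right-hand side of the coagulation-with-emission equation for `u n`:
`(1/M)[∑_{i=1}^{n+ℓ−1} i(n+ℓ−i) u_i u_{n+ℓ−i} − 2 n u_n ∑_{i ≥ max(1, ℓ−n+1)} i u_i]`. -/
def coagRHS (ℓ : ℕ) (u : ℕ → ℝ → ℝ) (n : ℕ) (t : ℝ) : ℝ :=
  (1 / Mfun ℓ u t) *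
    ((∑ i ∈ Finset.Icc 1 (n + ℓ - 1),
        (i : ℝ) * ((n + ℓ - i : ℕ) : ℝ) * u i t * u (n + ℓ - i) t)
      - 2 * (n : ℝ) * u n t *
          (∑' i : ℕ, if max 1 (ℓ + 1 - n) ≤ i then (i : ℝ) * u i t else 0))

/-- `u` is a (C¹) solution of the coagulation-with-emission equations on `[0,T]`,
with `M > 0` on `[0,T]` and nonnegative initial data summing to `1`. -/
structure IsCoagSolution (ℓ : ℕ) (T : ℝ) (u : ℕ → ℝ → ℝ) : Prop where
  contDiff : ∀ n, 1 ≤ n → ContDiffOn ℝ 1 (u n) (Set.Icc 0 T)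
  Msummable : ∀ t ∈ Set.Icc (0 : ℝ) T,
    Summable (fun p : ℕ × ℕ =>
      if 1 ≤ p.1 ∧ 1 ≤ p.2 ∧ ℓ + 1 ≤ p.1 + p.2 then
        (p.1 : ℝ) * (p.2 : ℝ) * u p.1 t * u p.2 t
      else 0)
  Mpos : ∀ t ∈ Set.Icc (0 : ℝ) T, 0 < Mfun ℓ u t
  ode : ∀ n, 1 ≤ n → ∀ t ∈ Set.Icc (0 : ℝ) T,
    HasDerivWithinAt (u n) (coagRHS ℓ u n t) (Set.Icc 0 T) t
  init_nonneg : ∀ n, 1 ≤ n → 0 ≤ u n 0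
  init_sum : HasSum (fun i : ℕ => if 1 ≤ i then u i 0 else 0) 1

/-- A finite mass solution: a nonnegative solution whose first-moment series
`m₁(t) = ∑_{i ≥ 1} i u_i(t)` converges uniformly on `[0,T]`. -/
structure IsFiniteMassSolution (ℓ : ℕ) (T : ℝ) (u : ℕ → ℝ → ℝ)
    extends IsCoagSolution ℓ T u : Prop where
  nonneg : ∀ n, 1 ≤ n → ∀ t ∈ Set.Icc (0 : ℝ) T, 0 ≤ u n t
  m1_unif : TendstoUniformlyOn
    (fun N t => ∑ i ∈ Finset.range N, (i : ℝ) * u i t)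
    (fun t => ∑' i : ℕ, (i : ℝ) * u i t) atTop (Set.Icc 0 T)

private lemma coag_sum_bound (ℓ : ℕ) (hℓ : 1 ≤ ℓ) (T : ℝ) (hT : 0 < T)
    (u : ℕ → ℝ → ℝ)
    (a : ℝ → ℕ → ℝ) (ha_def : a = fun (t : ℝ) (i : ℕ) => (i : ℝ) * u i t)
    (m1 : ℝ → ℝ)
    (θ : ℝ → ℝ) (hθ_def : θ = fun t => ∑' j : ℕ, if ℓ + 1 ≤ j then a t j else 0)
    (hann : ∀ t ∈ Set.Icc (0:ℝ) T, ∀ i, 0 ≤ a t i)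
    (hsummable : ∀ t ∈ Set.Icc (0:ℝ) T, Summable (a t))
    (hm1sum : ∀ t ∈ Set.Icc (0:ℝ) T, HasSum (a t) (m1 t))
    (hm1nn : ∀ t ∈ Set.Icc (0:ℝ) T, 0 ≤ m1 t)
    (hθsumm : ∀ t ∈ Set.Icc (0:ℝ) T, Summable (fun j => if ℓ + 1 ≤ j then a t j else 0))
    (Mpos : ∀ t ∈ Set.Icc (0 : ℝ) T, 0 < Mfun ℓ u t)
    (N : ℕ) (hNℓ : ℓ ≤ N)
    (t : ℝ) (ht : t ∈ Set.Icc (0:ℝ) T) :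
    ∑ n ∈ Icc (ℓ+1) (2*N), ((min n (2*N - n) : ℕ) : ℝ) * coagRHS ℓ u n t
      ≤ (1 / Mfun ℓ u t) * (2 * (ℓ:ℝ) * m1 t * θ t) := by
  set w : ℕ → ℕ := fun n => min n (2*N - n) with hw_def
  set X : ℕ → ℕ → ℝ := fun i j => (i : ℝ) * (j : ℝ) * u i t * u j t with hX_def
  set P := (Icc 1 (2*N+ℓ) ×ˢ Icc 1 (2*N+ℓ)).filter
      (fun p => 2*ℓ+1 ≤ p.1+p.2 ∧ p.1+p.2 ≤ 2*N+ℓ) with hP_def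
  have hXnn : ∀ i j, 1 ≤ i → 1 ≤ j → 0 ≤ X i j := by
    intro i j hi hj
    have h1 : 0 ≤ u i t := by
      have := hann t ht i
      rw [ha_def] at this
      simp only at this
      by_contra hc
      push_neg at hc
      nlinarith [show (0:ℝ) < (i:ℝ) from by exact_mod_cast hi]
    have h2 : 0 ≤ u j t := by
      have := hann t ht j
      rw [ha_def] at this
      simp only at this
      by_contra hc
      push_neg at hc
      nlinarith [show (0:ℝ) < (j:ℝ) from by exact_mod_cast hj]
    simp only [hX_def]
    positivity
  have hloss : ∀ n ∈ Icc (ℓ+1) (2*N),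
      (∑' i : ℕ, if max 1 (ℓ + 1 - n) ≤ i then (i:ℝ) * u i t else 0) = m1 t := by
    intro n hn
    simp only [mem_Icc] at hn
    have hmax : max 1 (ℓ + 1 - n) = 1 := by omega
    rw [hmax, ← (hm1sum t ht).tsum_eq]
    apply tsum_congr
    intro i
    match i with
    | 0 => simp [ha_def]
    | (k+1) => rw [if_pos (by omega)]; rw [ha_def]
  -- derivative sum identity
  have hDeq : ∑ n ∈ Icc (ℓ+1) (2*N), (w n : ℝ) * coagRHS ℓ u n t
      = (1 / Mfun ℓ u t) * ((∑ p ∈ P, (w (p.1+p.2-ℓ) : ℝ) * X p.1 p.2)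
          - 2 * m1 t * ∑ n ∈ Icc (ℓ+1) (2*N), (w n : ℝ) * a t n) := by
    have h1 : ∀ n ∈ Icc (ℓ+1) (2*N), (w n:ℝ) * coagRHS ℓ u n t
        = (1 / Mfun ℓ u t) * ((∑ i ∈ Icc 1 (n+ℓ-1), (w n : ℝ) * X i (n+ℓ-i))
            - 2 * m1 t * ((w n:ℝ) * a t n)) := by
      intro n hn
      rw [show coagRHS ℓ u n t = (1 / Mfun ℓ u t) *
        ((∑ i ∈ Finset.Icc 1 (n + ℓ - 1),
          (i : ℝ) * ((n + ℓ - i : ℕ) : ℝ) * u i t * u (n + ℓ - i) t)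
        - 2 * (n : ℝ) * u n t *
            (∑' i : ℕ, if max 1 (ℓ + 1 - n) ≤ i then (i : ℝ) * u i t else 0)) from rfl]
      rw [hloss n hn, ← Finset.mul_sum, ha_def, hX_def]
      simp only
      ring
    rw [Finset.sum_congr rfl h1, ← Finset.mul_sum]
    congr 1
    rw [Finset.sum_sub_distrib, ← Finset.mul_sum]
    congr 1
    have h2 : ∀ n ∈ Icc (ℓ+1) (2*N), ∑ i ∈ Icc 1 (n+ℓ-1), (w n : ℝ) * X i (n+ℓ-i)
        = ∑ i ∈ Icc 1 (n+ℓ-1), (w (i+(n+ℓ-i)-ℓ) : ℝ) * X i (n+ℓ-i) := by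
      intro n hn
      simp only [mem_Icc] at hn
      apply Finset.sum_congr rfl
      intro i hi
      simp only [mem_Icc] at hi
      have he : i + (n+ℓ-i) - ℓ = n := by omega
      rw [he]
    rw [Finset.sum_congr rfl h2]
    exact gain_reindex ℓ N hℓ (fun i j => (w (i+j-ℓ) : ℝ) * X i j)
  set Θ : ℝ := ∑ n ∈ Icc (ℓ+1) (2*N), (w n : ℝ) * a t n with hΘ_def
  have hΘnn : 0 ≤ Θ := by
    rw [hΘ_def]
    exact Finset.sum_nonneg fun n _ => mul_nonneg (Nat.cast_nonneg _) (hann t ht n)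
  set w' : ℕ → ℕ := fun k => if k ≤ ℓ then ℓ else w k with hw'_def
  have hstep1 : ∑ p ∈ P, (w (p.1+p.2-ℓ):ℝ) * X p.1 p.2
      ≤ ∑ p ∈ P, ((w' p.1 + w' p.2 : ℕ) : ℝ) * X p.1 p.2 := by
    apply Finset.sum_le_sum
    intro p hp
    simp only [hP_def, mem_filter, mem_product, mem_Icc] at hp
    apply mul_le_mul_of_nonneg_right _ (hXnn _ _ hp.1.1.1 hp.1.2.1)
    have hb := w_min_bound (N := N) (ℓ := ℓ) (i := p.1) (j := p.2) hNℓ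
      hp.1.1.1 hp.1.2.1 hp.2.1
    have : w (p.1+p.2-ℓ) ≤ w' p.1 + w' p.2 := by
      simp only [hw_def, hw'_def]
      exact hb
    exact_mod_cast this
  have hstep2 : ∑ p ∈ P, ((w' p.1 + w' p.2 : ℕ):ℝ) * X p.1 p.2
      = ∑ p ∈ P, (w' p.1 : ℝ) * X p.1 p.2 + ∑ p ∈ P, (w' p.2 : ℝ) * X p.1 p.2 := by
    rw [← Finset.sum_add_distrib]
    apply Finset.sum_congr rfl
    intro p _
    push_cast
    ring
  have hswap : ∑ p ∈ P, (w' p.2 : ℝ) * X p.1 p.2 = ∑ p ∈ P, (w' p.1 : ℝ) * X p.1 p.2 := by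
    have hPswap : ∀ p ∈ P, p.swap ∈ P := by
      intro p hp
      simp only [hP_def, mem_filter, mem_product, mem_Icc, Prod.fst_swap, Prod.snd_swap] at hp ⊢
      omega
    have hs := swap_sum P hPswap (fun i j => (w' i : ℝ) * X i j)
    calc ∑ p ∈ P, (w' p.2 : ℝ) * X p.1 p.2
        = ∑ p ∈ P, (w' p.2 : ℝ) * X p.2 p.1 := by
          apply Finset.sum_congr rfl
          intro p _
          simp only [hX_def]
          ring
      _ = ∑ p ∈ P, (w' p.1 : ℝ) * X p.1 p.2 := hs.symm
  -- the small-index part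
  have hs1 : ∑ i ∈ Icc 1 ℓ, a t i ≤ m1 t := by
    rw [← (hm1sum t ht).tsum_eq]
    exact Summable.sum_le_tsum _ (fun i _ => hann t ht i) (hsummable t ht)
  have hs2 : ∑ j ∈ Icc (ℓ+1) (2*N+ℓ), a t j ≤ θ t := by
    have he : ∑ j ∈ Icc (ℓ+1) (2*N+ℓ), a t j
        = ∑ j ∈ Icc (ℓ+1) (2*N+ℓ), (if ℓ+1 ≤ j then a t j else 0) := by
      apply Finset.sum_congr rfl
      intro j hj
      simp only [mem_Icc] at hj
      rw [if_pos hj.1]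
    rw [he, hθ_def]
    apply Summable.sum_le_tsum _ (fun j _ => ?_) (hθsumm t ht)
    split
    · exact hann t ht j
    · exact le_rfl
  have hs3 : ∑ j ∈ Icc 1 (2*N+ℓ), a t j ≤ m1 t := by
    rw [← (hm1sum t ht).tsum_eq]
    exact Summable.sum_le_tsum _ (fun i _ => hann t ht i) (hsummable t ht)
  have hsmall : ∑ p ∈ P.filter (fun p => p.1 ≤ ℓ), (w' p.1:ℝ) * X p.1 p.2
      ≤ (ℓ:ℝ) * m1 t * θ t := by
    have hsub : P.filter (fun p => p.1 ≤ ℓ) ⊆ Icc 1 ℓ ×ˢ Icc (ℓ+1) (2*N+ℓ) := by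
      intro p hp
      simp only [hP_def, mem_filter, mem_product, mem_Icc] at hp ⊢
      omega
    have h1 : ∑ p ∈ P.filter (fun p => p.1 ≤ ℓ), (w' p.1:ℝ) * X p.1 p.2
        ≤ ∑ p ∈ Icc 1 ℓ ×ˢ Icc (ℓ+1) (2*N+ℓ), (w' p.1:ℝ) * X p.1 p.2 := by
      apply Finset.sum_le_sum_of_subset_of_nonneg hsub
      intro p hp _
      simp only [mem_product, mem_Icc] at hp
      exact mul_nonneg (Nat.cast_nonneg _) (hXnn _ _ hp.1.1 (by omega))
    have h2 : ∑ p ∈ Icc 1 ℓ ×ˢ Icc (ℓ+1) (2*N+ℓ), (w' p.1:ℝ) * X p.1 p.2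
        = (∑ i ∈ Icc 1 ℓ, (ℓ:ℝ) * a t i) * (∑ j ∈ Icc (ℓ+1) (2*N+ℓ), a t j) := by
      rw [Finset.sum_mul_sum, Finset.sum_product]
      apply Finset.sum_congr rfl
      intro i hi
      apply Finset.sum_congr rfl
      intro j hj
      simp only [mem_Icc] at hi
      simp only [hw'_def, if_pos hi.2, ha_def, hX_def]
      ring
    have h3 : (∑ i ∈ Icc 1 ℓ, (ℓ:ℝ) * a t i) = (ℓ:ℝ) * ∑ i ∈ Icc 1 ℓ, a t i :=
      (Finset.mul_sum _ _ _).symm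
    have hsum1nn : 0 ≤ ∑ i ∈ Icc 1 ℓ, a t i := Finset.sum_nonneg fun i _ => hann t ht i
    have hsum2nn : 0 ≤ ∑ j ∈ Icc (ℓ+1) (2*N+ℓ), a t j :=
      Finset.sum_nonneg fun j _ => hann t ht j
    calc ∑ p ∈ P.filter (fun p => p.1 ≤ ℓ), (w' p.1:ℝ) * X p.1 p.2
        ≤ (∑ i ∈ Icc 1 ℓ, (ℓ:ℝ) * a t i) * (∑ j ∈ Icc (ℓ+1) (2*N+ℓ), a t j) := h2 ▸ h1
      _ ≤ ((ℓ:ℝ) * m1 t) * θ t := by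
          rw [h3]
          apply mul_le_mul (mul_le_mul_of_nonneg_left hs1 (Nat.cast_nonneg ℓ)) hs2 hsum2nn
          exact mul_nonneg (Nat.cast_nonneg ℓ) (hm1nn t ht)
      _ = (ℓ:ℝ) * m1 t * θ t := by ring
  have hbig : ∑ p ∈ P.filter (fun p => ¬ p.1 ≤ ℓ), (w' p.1:ℝ) * X p.1 p.2
      ≤ Θ * m1 t := by
    have hsub : P.filter (fun p => ¬ p.1 ≤ ℓ) ⊆ Icc (ℓ+1) (2*N+ℓ) ×ˢ Icc 1 (2*N+ℓ) := by
      intro p hp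
      simp only [hP_def, mem_filter, mem_product, mem_Icc] at hp ⊢
      omega
    have h1 : ∑ p ∈ P.filter (fun p => ¬ p.1 ≤ ℓ), (w' p.1:ℝ) * X p.1 p.2
        ≤ ∑ p ∈ Icc (ℓ+1) (2*N+ℓ) ×ˢ Icc 1 (2*N+ℓ), (w' p.1:ℝ) * X p.1 p.2 := by
      apply Finset.sum_le_sum_of_subset_of_nonneg hsub
      intro p hp _
      simp only [mem_product, mem_Icc] at hp
      exact mul_nonneg (Nat.cast_nonneg _) (hXnn _ _ (by omega) hp.2.1)
    have h2 : ∑ p ∈ Icc (ℓ+1) (2*N+ℓ) ×ˢ Icc 1 (2*N+ℓ), (w' p.1:ℝ) * X p.1 p.2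
        = (∑ i ∈ Icc (ℓ+1) (2*N+ℓ), (w i:ℝ) * a t i) * (∑ j ∈ Icc 1 (2*N+ℓ), a t j) := by
      rw [Finset.sum_mul_sum, Finset.sum_product]
      apply Finset.sum_congr rfl
      intro i hi
      apply Finset.sum_congr rfl
      intro j hj
      simp only [mem_Icc] at hi
      simp only [hw'_def, if_neg (by omega : ¬ i ≤ ℓ), ha_def, hX_def]
      ring
    have h3 : ∑ i ∈ Icc (ℓ+1) (2*N+ℓ), (w i:ℝ) * a t i = Θ := by
      rw [hΘ_def]
      symm
      apply Finset.sum_subset (Finset.Icc_subset_Icc_right (by omega))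
      intro x hx hnx
      simp only [mem_Icc] at hx hnx
      have hx2N : 2*N < x := by omega
      have hwx : w x = 0 := by
        simp only [hw_def]
        omega
      rw [hwx]
      simp
    have hΘnn' : 0 ≤ ∑ i ∈ Icc (ℓ+1) (2*N+ℓ), (w i:ℝ) * a t i :=
      Finset.sum_nonneg fun i _ => mul_nonneg (Nat.cast_nonneg _) (hann t ht i)
    calc ∑ p ∈ P.filter (fun p => ¬ p.1 ≤ ℓ), (w' p.1:ℝ) * X p.1 p.2
        ≤ (∑ i ∈ Icc (ℓ+1) (2*N+ℓ), (w i:ℝ) * a t i) * (∑ j ∈ Icc 1 (2*N+ℓ), a t j) :=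
          h2 ▸ h1
      _ ≤ (∑ i ∈ Icc (ℓ+1) (2*N+ℓ), (w i:ℝ) * a t i) * m1 t :=
          mul_le_mul_of_nonneg_left hs3 hΘnn'
      _ = Θ * m1 t := by rw [h3]
  have hmain : ∑ p ∈ P, (w' p.1:ℝ) * X p.1 p.2 ≤ (ℓ:ℝ) * m1 t * θ t + Θ * m1 t := by
    rw [← Finset.sum_filter_add_sum_filter_not P (fun p => p.1 ≤ ℓ)]
    exact add_le_add hsmall hbig
  have hgainle : ∑ p ∈ P, (w (p.1+p.2-ℓ):ℝ) * X p.1 p.2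
      ≤ 2 * ((ℓ:ℝ) * m1 t * θ t) + 2 * m1 t * Θ := by
    calc ∑ p ∈ P, (w (p.1+p.2-ℓ):ℝ) * X p.1 p.2
        ≤ ∑ p ∈ P, ((w' p.1 + w' p.2 : ℕ):ℝ) * X p.1 p.2 := hstep1
      _ = ∑ p ∈ P, (w' p.1 : ℝ) * X p.1 p.2 + ∑ p ∈ P, (w' p.2 : ℝ) * X p.1 p.2 := hstep2
      _ = 2 * ∑ p ∈ P, (w' p.1 : ℝ) * X p.1 p.2 := by rw [hswap]; ring
      _ ≤ 2 * ((ℓ:ℝ) * m1 t * θ t + Θ * m1 t) := by linarith [hmain]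
      _ = 2 * ((ℓ:ℝ) * m1 t * θ t) + 2 * m1 t * Θ := by ring
  -- conclude
  have hMt : 0 < Mfun ℓ u t := Mpos t ht
  rw [hDeq]
  apply mul_le_mul_of_nonneg_left _ (by positivity)
  linarith [hgainle]

/-- no spontaneous generation of large clusters. For `ℓ ≥ 1` and a
finite mass solution on `[0,T]` with small initial conditions (`u_i(0) = 0` for
`i > ℓ`), one has `u_i(t) = 0` for all `i > ℓ` and `t ∈ [0,T]`. -/
theorem no_spontaneous_generation_large (ℓ : ℕ) (hℓ : 1 ≤ ℓ) (T : ℝ) (hT : 0 < T)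
    (u : ℕ → ℝ → ℝ) (hu : IsFiniteMassSolution ℓ T u)
    (hsmall : ∀ i, ℓ < i → u i 0 = 0) :
    ∀ i, ℓ < i → ∀ t ∈ Set.Icc (0 : ℝ) T, u i t = 0 := by
  classical
  -- basic abbreviations
  set a : ℝ → ℕ → ℝ := fun (t : ℝ) (i : ℕ) => (i : ℝ) * u i t with ha_def
  set m1 : ℝ → ℝ := fun t => ∑' i : ℕ, (i : ℝ) * u i t with hm1_def
  have hann : ∀ t ∈ Set.Icc (0:ℝ) T, ∀ i, 0 ≤ a t i := by
    intro t ht i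
    rcases Nat.eq_zero_or_pos i with h | h
    · simp [ha_def, h]
    · exact mul_nonneg (by positivity) (hu.nonneg i h t ht)
  have hcont_part : ∀ n : ℕ, ContinuousOn (fun t => ∑ i ∈ Finset.range n, (i:ℝ) * u i t)
      (Set.Icc 0 T) := by
    intro n
    apply continuousOn_finset_sum
    intro i _
    rcases Nat.eq_zero_or_pos i with h | h
    · simp only [h, Nat.cast_zero, zero_mul]
      exact continuousOn_const
    · exact continuousOn_const.mul (hu.toIsCoagSolution.contDiff i h).continuousOn
  have hm1c : ContinuousOn m1 (Set.Icc 0 T) :=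
    hu.m1_unif.continuousOn (Eventually.of_forall hcont_part).frequently
  have hsummable : ∀ t ∈ Set.Icc (0:ℝ) T, Summable (a t) := by
    intro t ht
    have htd : Tendsto (fun N => ∑ i ∈ Finset.range N, a t i) atTop (𝓝 (m1 t)) :=
      hu.m1_unif.tendsto_at ht
    have hmono : Monotone (fun N => ∑ i ∈ Finset.range N, a t i) := by
      intro p q hpq
      exact Finset.sum_le_sum_of_subset_of_nonneg (Finset.range_subset_range.2 hpq)
        (fun i _ _ => hann t ht i)
    exact summable_of_sum_range_le (fun i => hann t ht i) (fun n => hmono.ge_of_tendsto htd n)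
  have hm1sum : ∀ t ∈ Set.Icc (0:ℝ) T, HasSum (a t) (m1 t) :=
    fun t ht => (hsummable t ht).hasSum
  have hm1nn : ∀ t ∈ Set.Icc (0:ℝ) T, 0 ≤ m1 t :=
    fun t ht => tsum_nonneg (hann t ht)
  -- the value of Mfun as a difference, hence its continuity
  have hMeq : ∀ t ∈ Set.Icc (0:ℝ) T, Mfun ℓ u t
      = m1 t * m1 t - ∑ p ∈ (Icc 1 ℓ ×ˢ Icc 1 ℓ).filter (fun p => p.1 + p.2 ≤ ℓ),
          a t p.1 * a t p.2 := by
    intro t ht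
    have hprodsum : Summable (fun p : ℕ × ℕ => a t p.1 * a t p.2) :=
      (hsummable t ht).mul_of_nonneg (hsummable t ht) (hann t ht) (hann t ht)
    have hprod : HasSum (fun p : ℕ × ℕ => a t p.1 * a t p.2) (m1 t * m1 t) :=
      (hm1sum t ht).mul (hm1sum t ht) hprodsum
    have hh0 : ∀ p : ℕ × ℕ, p ∉ (Icc 1 ℓ ×ˢ Icc 1 ℓ).filter (fun p => p.1 + p.2 ≤ ℓ) →
        (if 1 ≤ p.1 ∧ 1 ≤ p.2 ∧ p.1 + p.2 ≤ ℓ then a t p.1 * a t p.2 else 0) = 0 := by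
      intro p hp
      rw [if_neg]
      intro hc
      apply hp
      simp only [mem_filter, mem_product, mem_Icc]
      omega
    have hh : HasSum (fun p : ℕ × ℕ =>
        if 1 ≤ p.1 ∧ 1 ≤ p.2 ∧ p.1 + p.2 ≤ ℓ then a t p.1 * a t p.2 else 0)
        (∑ p ∈ (Icc 1 ℓ ×ˢ Icc 1 ℓ).filter (fun p => p.1 + p.2 ≤ ℓ),
          a t p.1 * a t p.2) := by
      have heq : ∑ p ∈ (Icc 1 ℓ ×ˢ Icc 1 ℓ).filter (fun p => p.1 + p.2 ≤ ℓ),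
          a t p.1 * a t p.2
          = ∑ p ∈ (Icc 1 ℓ ×ˢ Icc 1 ℓ).filter (fun p => p.1 + p.2 ≤ ℓ),
            (if 1 ≤ p.1 ∧ 1 ≤ p.2 ∧ p.1 + p.2 ≤ ℓ then a t p.1 * a t p.2 else 0) := by
        apply Finset.sum_congr rfl
        intro p hp
        simp only [mem_filter, mem_product, mem_Icc] at hp
        rw [if_pos ⟨hp.1.1.1, hp.1.2.1, hp.2⟩]
      rw [heq]
      exact hasSum_sum_of_ne_finset_zero hh0
    have hfun : (fun p : ℕ × ℕ =>
        if 1 ≤ p.1 ∧ 1 ≤ p.2 ∧ ℓ + 1 ≤ p.1 + p.2 then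
          (p.1 : ℝ) * (p.2 : ℝ) * u p.1 t * u p.2 t else 0)
        = fun p : ℕ × ℕ => a t p.1 * a t p.2 -
            (if 1 ≤ p.1 ∧ 1 ≤ p.2 ∧ p.1 + p.2 ≤ ℓ then a t p.1 * a t p.2 else 0) := by
      funext p
      by_cases h1 : 1 ≤ p.1
      · by_cases h2 : 1 ≤ p.2
        · by_cases h3 : ℓ + 1 ≤ p.1 + p.2
          · rw [if_pos ⟨h1, h2, h3⟩, if_neg (by omega), sub_zero, ha_def]
            ring
          · rw [if_neg (by omega), if_pos ⟨h1, h2, by omega⟩, sub_self]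
        · have hp2 : p.2 = 0 := by omega
          rw [if_neg (by omega), if_neg (by omega), ha_def]
          simp [hp2]
      · have hp1 : p.1 = 0 := by omega
        rw [if_neg (by omega), if_neg (by omega), ha_def]
        simp [hp1]
    rw [Mfun, hfun]
    exact (hprod.sub hh).tsum_eq
  have hMc : ContinuousOn (Mfun ℓ u) (Set.Icc 0 T) := by
    have hcont : ContinuousOn (fun t => m1 t * m1 t -
        ∑ p ∈ (Icc 1 ℓ ×ˢ Icc 1 ℓ).filter (fun p => p.1 + p.2 ≤ ℓ), a t p.1 * a t p.2)
        (Set.Icc 0 T) := by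
      apply (hm1c.mul hm1c).sub
      apply continuousOn_finset_sum
      intro p hp
      simp only [mem_filter, mem_product, mem_Icc] at hp
      rw [ha_def]
      exact (continuousOn_const.mul (hu.toIsCoagSolution.contDiff p.1 hp.1.1.1).continuousOn).mul
        (continuousOn_const.mul (hu.toIsCoagSolution.contDiff p.2 hp.1.2.1).continuousOn)
    exact hcont.congr (fun t ht => hMeq t ht)
  -- compactness bounds
  have hne : (Set.Icc (0:ℝ) T).Nonempty := ⟨0, le_refl _, hT.le⟩
  obtain ⟨t₀, ht₀, hmin⟩ := isCompact_Icc.exists_isMinOn hne hMc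
  have hδ : 0 < Mfun ℓ u t₀ := hu.toIsCoagSolution.Mpos t₀ ht₀
  have hδle : ∀ t ∈ Set.Icc (0:ℝ) T, Mfun ℓ u t₀ ≤ Mfun ℓ u t :=
    fun t ht => isMinOn_iff.mp hmin t ht
  obtain ⟨t₁, ht₁, hmax⟩ := isCompact_Icc.exists_isMaxOn hne hm1c
  have hBle : ∀ t ∈ Set.Icc (0:ℝ) T, m1 t ≤ m1 t₁ :=
    fun t ht => isMaxOn_iff.mp hmax t ht
  set δ : ℝ := Mfun ℓ u t₀ with hδ_def
  set B : ℝ := m1 t₁ with hB_def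
  have hB0 : 0 ≤ B := hm1nn t₁ ht₁
  -- the tail first moment
  set θ : ℝ → ℝ := fun t => ∑' j : ℕ, if ℓ + 1 ≤ j then a t j else 0 with hθ_def
  have hθsumm : ∀ t ∈ Set.Icc (0:ℝ) T, Summable (fun j => if ℓ + 1 ≤ j then a t j else 0) := by
    intro t ht
    apply Summable.of_nonneg_of_le (fun j => ?_) (fun j => ?_) (hsummable t ht)
    · split
      · exact hann t ht j
      · exact le_rfl
    · split
      · exact le_rfl
      · exact hann t ht j
  have hθnn : ∀ t ∈ Set.Icc (0:ℝ) T, 0 ≤ θ t := by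
    intro t ht
    apply tsum_nonneg
    intro j
    split
    · exact hann t ht j
    · exact le_rfl
  have hθge : ∀ t ∈ Set.Icc (0:ℝ) T, ∀ j, ℓ + 1 ≤ j → a t j ≤ θ t := by
    intro t ht j hj
    have := Summable.le_tsum (hθsumm t ht) j (fun i _ => by
      split
      · exact hann t ht i
      · exact le_rfl)
    rwa [if_pos hj] at this
  -- uniform smallness of tails
  have htail : ∀ η : ℝ, 0 < η → ∃ N₀ : ℕ, ∀ N ≥ N₀, ∀ t ∈ Set.Icc (0:ℝ) T,
      (∑' j : ℕ, if N + 1 ≤ j then a t j else 0) ≤ η := by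
    intro η hη
    have := (Metric.tendstoUniformlyOn_iff.mp hu.m1_unif) η hη
    obtain ⟨N₀, hN₀⟩ := this.exists_forall_of_atTop
    refine ⟨N₀, fun N hN t ht => ?_⟩
    have hc0 : ∀ j : ℕ, j ∉ Finset.range (N+1) →
        (if j ∈ Finset.range (N+1) then a t j else 0) = 0 :=
      fun j hj => if_neg hj
    have hc : HasSum (fun j => if j ∈ Finset.range (N+1) then a t j else 0)
        (∑ j ∈ Finset.range (N+1), a t j) := by
      have heq : ∑ j ∈ Finset.range (N+1), a t j
          = ∑ j ∈ Finset.range (N+1), (if j ∈ Finset.range (N+1) then a t j else 0) :=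
        Finset.sum_congr rfl (fun j hj => (if_pos hj).symm)
      rw [heq]
      exact hasSum_sum_of_ne_finset_zero hc0
    have hsub : HasSum (fun j => if N + 1 ≤ j then a t j else 0)
        (m1 t - ∑ j ∈ Finset.range (N+1), a t j) := by
      have h := (hm1sum t ht).sub hc
      have heq : (fun j => a t j - (if j ∈ Finset.range (N+1) then a t j else 0))
          = fun j => if N + 1 ≤ j then a t j else 0 := by
        funext j
        by_cases hj : N + 1 ≤ j
        · rw [if_pos hj, if_neg (by simp [Finset.mem_range]; omega), sub_zero]
        · rw [if_neg hj, if_pos (by simp [Finset.mem_range]; omega), sub_self]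
      rwa [heq] at h
    rw [hsub.tsum_eq]
    have hd := hN₀ (N+1) (by omega) t ht
    rw [Real.dist_eq] at hd
    have h2 : |m1 t - ∑ j ∈ Finset.range (N+1), a t j| < η := hd
    linarith [le_abs_self (m1 t - ∑ j ∈ Finset.range (N+1), a t j)]
  -- the Gronwall constant
  set c0 : ℝ := (1/δ) * (2 * (ℓ:ℝ) * B) with hc0_def
  set K : ℝ := max c0 1 with hK_def
  have hc00 : 0 ≤ c0 := by
    rw [hc0_def]
    positivity
  have hK1 : (1:ℝ) ≤ K := le_max_right _ _
  have hK0 : (0:ℝ) < K := lt_of_lt_of_le one_pos hK1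
  have hc0K : c0 ≤ K := le_max_left _ _
  -- per-η estimate
  have hkey : ∀ j, ℓ + 1 ≤ j → ∀ t ∈ Set.Icc (0:ℝ) T,
      ∀ η : ℝ, 0 < η → a t j ≤ η * Real.exp (K * T) := by
    intro j hj t ht η hη
    obtain ⟨N₀, hN₀⟩ := htail η hη
    obtain ⟨N, hNN₀, hNℓ⟩ : ∃ N, N₀ ≤ N ∧ ℓ ≤ N :=
      ⟨max N₀ ℓ, le_max_left _ _, le_max_right _ _⟩
    set w : ℕ → ℕ := fun n => min n (2*N - n) with hw_def
    set Φ : ℝ → ℝ := fun t => ∑ n ∈ Icc (ℓ+1) (2*N), (w n : ℝ) * u n t with hΦ_def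
    have hΦc : ContinuousOn Φ (Set.Icc 0 T) := by
      apply continuousOn_finset_sum
      intro n hn
      simp only [mem_Icc] at hn
      exact continuousOn_const.mul
        (hu.toIsCoagSolution.contDiff n (by omega)).continuousOn
    have hΦnn : ∀ s ∈ Set.Icc (0:ℝ) T, 0 ≤ Φ s := by
      intro s hs
      apply Finset.sum_nonneg
      intro n hn
      simp only [mem_Icc] at hn
      exact mul_nonneg (Nat.cast_nonneg _) (hu.nonneg n (by omega) s hs)
    have hΦ0 : Φ 0 = 0 := by
      apply Finset.sum_eq_zero
      intro n hn
      simp only [mem_Icc] at hn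
      rw [hsmall n (by omega), mul_zero]
    -- θ ≤ Φ + tail
    have hθΦ : ∀ s ∈ Set.Icc (0:ℝ) T, θ s ≤ Φ s + η := by
      intro s hs
      set b1 : ℕ → ℝ := fun n => if n ∈ Icc (ℓ+1) (2*N) then (w n:ℝ) * u n s else 0
        with hb1_def
      set b2 : ℕ → ℝ := fun n => if N + 1 ≤ n then a s n else 0 with hb2_def
      have hb1 : Summable b1 :=
        summable_of_ne_finset_zero (s := Icc (ℓ+1) (2*N)) (fun n hn => if_neg hn)
      have hb2 : Summable b2 := by
        apply Summable.of_nonneg_of_le (fun n => ?_) (fun n => ?_) (hsummable s hs)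
        · show (0:ℝ) ≤ if N + 1 ≤ n then a s n else 0
          split
          · exact hann s hs n
          · exact le_rfl
        · show (if N + 1 ≤ n then a s n else 0) ≤ a s n
          split
          · exact le_rfl
          · exact hann s hs n
      have hpt : ∀ n, (if ℓ + 1 ≤ n then a s n else 0) ≤ b1 n + b2 n := by
        intro n
        have hb1nn : 0 ≤ b1 n := by
          show (0:ℝ) ≤ if n ∈ Icc (ℓ+1) (2*N) then (w n:ℝ) * u n s else 0
          split
          · rename_i hmem
            simp only [mem_Icc] at hmem
            exact mul_nonneg (Nat.cast_nonneg _) (hu.nonneg n (by omega) s hs)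
          · exact le_rfl
        have hb2nn : 0 ≤ b2 n := by
          show (0:ℝ) ≤ if N + 1 ≤ n then a s n else 0
          split
          · exact hann s hs n
          · exact le_rfl
        by_cases hn1 : ℓ + 1 ≤ n
        · rw [if_pos hn1]
          by_cases hn2 : n ≤ N
          · have hmem : n ∈ Icc (ℓ+1) (2*N) := by
              simp only [mem_Icc]
              omega
            have hwn : w n = n := by
              simp only [hw_def]
              omega
            have : b1 n = a s n := by
              show (if n ∈ Icc (ℓ+1) (2*N) then (w n:ℝ) * u n s else 0) = a s n
              rw [if_pos hmem, hwn]
            linarith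
          · have : b2 n = a s n := by
              show (if N + 1 ≤ n then a s n else 0) = a s n
              rw [if_pos (by omega)]
            linarith
        · rw [if_neg hn1]
          positivity
      have h1 : θ s ≤ ∑' n, (b1 n + b2 n) :=
        Summable.tsum_le_tsum hpt (hθsumm s hs) (hb1.add hb2)
      have h2 : ∑' n, (b1 n + b2 n) = (∑' n, b1 n) + ∑' n, b2 n := Summable.tsum_add hb1 hb2
      have h3 : ∑' n, b1 n = Φ s := by
        rw [tsum_eq_sum (s := Icc (ℓ+1) (2*N)) (fun n hn => if_neg hn), hΦ_def]
        apply Finset.sum_congr rfl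
        intro n hn
        exact if_pos hn
      have h4 : ∑' n, b2 n ≤ η := hN₀ N hNN₀ s hs
      linarith
    -- derivative of Φ with the key differential inequality
    have hd : ∀ s ∈ Set.Icc (0:ℝ) T,
        HasDerivWithinAt Φ (∑ n ∈ Icc (ℓ+1) (2*N), (w n : ℝ) * coagRHS ℓ u n s)
          (Set.Icc 0 T) s := by
      intro s hs
      apply HasDerivWithinAt.fun_sum
      intro n hn
      simp only [mem_Icc] at hn
      exact HasDerivWithinAt.const_mul ((w n : ℝ))
        (hu.toIsCoagSolution.ode n (by omega) s hs)
    have hDbound : ∀ s ∈ Set.Icc (0:ℝ) T,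
        (∑ n ∈ Icc (ℓ+1) (2*N), (w n : ℝ) * coagRHS ℓ u n s) ≤ K * Φ s + K * η := by
      intro s hs
      have hstep : ∑ n ∈ Icc (ℓ+1) (2*N), (w n : ℝ) * coagRHS ℓ u n s
          ≤ (1 / Mfun ℓ u s) * (2 * (ℓ:ℝ) * m1 s * θ s) :=
        coag_sum_bound ℓ hℓ T hT u a ha_def m1 θ hθ_def hann hsummable hm1sum hm1nn
          hθsumm (fun s hs => hu.toIsCoagSolution.Mpos s hs) N hNℓ s hs
      have hMs : 0 < Mfun ℓ u s := hu.toIsCoagSolution.Mpos s hs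
      have hδles : δ ≤ Mfun ℓ u s := hδle s hs
      have hrhsnn : 0 ≤ 2 * (ℓ:ℝ) * m1 s * θ s := by
        have := hm1nn s hs
        have := hθnn s hs
        positivity
      have e2 : (1 / Mfun ℓ u s) ≤ 1/δ := one_div_le_one_div_of_le hδ hδles
      have e4 : (1 / Mfun ℓ u s) * (2 * (ℓ:ℝ) * m1 s * θ s)
          ≤ (1/δ) * (2 * (ℓ:ℝ) * m1 s * θ s) :=
        mul_le_mul_of_nonneg_right e2 hrhsnn
      have e5 : (1/δ) * (2 * (ℓ:ℝ) * m1 s * θ s) ≤ (1/δ) * (2 * (ℓ:ℝ) * B * θ s) := by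
        apply mul_le_mul_of_nonneg_left _ (by positivity)
        have h1 := hBle s hs
        have h2 := hθnn s hs
        nlinarith [mul_nonneg (sub_nonneg.mpr h1) h2]
      have e6 : (1/δ) * (2 * (ℓ:ℝ) * B * θ s) = c0 * θ s := by
        rw [hc0_def]
        ring
      have e7 : c0 * θ s ≤ K * θ s := mul_le_mul_of_nonneg_right hc0K (hθnn s hs)
      have e8 : K * θ s ≤ K * (Φ s + η) :=
        mul_le_mul_of_nonneg_left (hθΦ s hs) hK0.le
      have e9 : K * (Φ s + η) = K * Φ s + K * η := by ring
      linarith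
    -- Gronwall
    have hgron := le_gronwallBound_of_liminf_deriv_right_le (a := 0) (b := T)
      (f := Φ) (f' := fun s => ∑ n ∈ Icc (ℓ+1) (2*N), (w n : ℝ) * coagRHS ℓ u n s)
      (δ := 0) (K := K) (ε := K * η) hΦc
      (fun x hx r hr => by
        have hxI : x ∈ Set.Icc (0:ℝ) T := Set.Ico_subset_Icc_self hx
        have hmem : Set.Icc (0:ℝ) T ∈ 𝓝[Set.Ici x] x := by
          apply Filter.mem_of_superset
            (Filter.inter_mem (mem_nhdsWithin_of_mem_nhds (Iic_mem_nhds hx.2))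
              self_mem_nhdsWithin)
          rintro y ⟨hy1, hy2⟩
          exact ⟨le_trans hx.1 hy2, hy1⟩
        exact ((hd x hxI).mono_of_mem_nhdsWithin hmem).liminf_right_slope_le hr)
      (le_of_eq hΦ0) (fun x hx => hDbound x (Set.Ico_subset_Icc_self hx))
    have hgt := hgron t ht
    have hgb : gronwallBound 0 K (K * η) (t - 0)
        = η * (Real.exp (K * t) - 1) := by
      rw [gronwallBound_of_K_ne_0 (ne_of_gt hK0)]
      simp only [sub_zero, zero_mul, zero_add]
      rw [mul_comm K η, mul_div_assoc, div_self (ne_of_gt hK0)]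
      ring
    have hθt : θ t ≤ η * Real.exp (K * t) := by
      have h1 := hθΦ t ht
      rw [hgb] at hgt
      nlinarith
    have hexp : Real.exp (K * t) ≤ Real.exp (K * T) := by
      apply Real.exp_le_exp.mpr
      have := ht.2
      nlinarith
    calc a t j ≤ θ t := hθge t ht j hj
      _ ≤ η * Real.exp (K * t) := hθt
      _ ≤ η * Real.exp (K * T) := by nlinarith
  -- conclusion
  intro i hi t ht
  have hge : 0 ≤ a t i := hann t ht i
  have hle : a t i ≤ 0 := by
    by_contra hcon
    push_neg at hcon
    have hE : 0 < Real.exp (K * T) := Real.exp_pos _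
    have hη : 0 < a t i / (2 * Real.exp (K * T)) := by positivity
    have := hkey i (by omega) t ht _ hη
    rw [div_mul_eq_mul_div, mul_comm] at this
    have h2 : Real.exp (K * T) * a t i / (2 * Real.exp (K * T)) = a t i / 2 := by
      field_simp
    rw [h2] at this
    linarith
  have hai : a t i = 0 := le_antisymm hle hge
  rw [ha_def] at hai
  simp only at hai
  have hi0 : (i:ℝ) ≠ 0 := by
    have h : (0:ℝ) < (i:ℝ) := by exact_mod_cast (by omega : 0 < i)
    exact ne_of_gt h
  rcases mul_eq_zero.mp hai with h | h
  · exact absurd h hi0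
  · exact h

end
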